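/- Let a, b : ℝ → ℝ be C² with b > a on (0,1) and suppose D = {(t,x) : 0 < t < 1, a(t) < x < b(t)} is convex. Then Φ(t) = -log(b(t)-a(t)) is affine on (0,1) if and only if there exists a constant c ∈ ℝ with a(t) = a(0) + ct and b(t) = b(0) + ct for all t ∈ (0,1) (triviality of the family of intervals). -/

import Mathlib

open Set Real

lemma aux_cc (a b : ℝ → ℝ) (hab : ∀ t, a t < b t)
    (hD : Convex ℝ {p : ℝ × ℝ | 0 < p.1 ∧ p.1 < 1 ∧ a p.1 < p.2 ∧ p.2 < b p.1}) :
    ∀ x ∈ Ioo (0:ℝ) 1, ∀ y ∈ Ioo (0:ℝ) 1, ∀ l m : ℝ, 0 ≤ l → 0 ≤ m → l + m = 1 →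
      a (l*x + m*y) ≤ l * a x + m * a y ∧ l * b x + m * b y ≤ b (l*x + m*y) := by
  intro x hx y hy l m hl hm hlm
  have key : ∀ ε > (0:ℝ), a (l*x + m*y) ≤ l * a x + m * a y + ε ∧
      l * b x + m * b y ≤ b (l*x + m*y) + ε := by
    intro ε hε
    have habx := hab x; have haby := hab y
    set X := b x - a x with hX
    set Y := b y - a y with hY
    have hXpos : 0 < X := by simp [hX]; linarith
    have hYpos : 0 < Y := by simp [hY]; linarith
    have hCpos : 0 < X + Y := by linarith
    set δ := min (ε / (X+Y)) (1/2) with hδ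
    have hδpos : 0 < δ := lt_min (div_pos hε hCpos) (by norm_num)
    have hδ1 : δ < 1 := lt_of_le_of_lt (min_le_right _ _) (by norm_num)
    have hδC : δ * (X+Y) ≤ ε := by
      calc δ * (X+Y) ≤ (ε / (X+Y)) * (X+Y) :=
            mul_le_mul_of_nonneg_right (min_le_left _ _) hCpos.le
        _ = ε := div_mul_cancel₀ _ hCpos.ne'
    have hmx : ((x, a x + δ * X) : ℝ × ℝ) ∈
        {p : ℝ × ℝ | 0 < p.1 ∧ p.1 < 1 ∧ a p.1 < p.2 ∧ p.2 < b p.1} :=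
      ⟨hx.1, hx.2, by dsimp only; nlinarith, by dsimp only; nlinarith⟩
    have hmy : ((y, a y + δ * Y) : ℝ × ℝ) ∈
        {p : ℝ × ℝ | 0 < p.1 ∧ p.1 < 1 ∧ a p.1 < p.2 ∧ p.2 < b p.1} :=
      ⟨hy.1, hy.2, by dsimp only; nlinarith, by dsimp only; nlinarith⟩
    have hMx : ((x, b x - δ * X) : ℝ × ℝ) ∈
        {p : ℝ × ℝ | 0 < p.1 ∧ p.1 < 1 ∧ a p.1 < p.2 ∧ p.2 < b p.1} :=
      ⟨hx.1, hx.2, by dsimp only; nlinarith, by dsimp only; nlinarith⟩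
    have hMy : ((y, b y - δ * Y) : ℝ × ℝ) ∈
        {p : ℝ × ℝ | 0 < p.1 ∧ p.1 < 1 ∧ a p.1 < p.2 ∧ p.2 < b p.1} :=
      ⟨hy.1, hy.2, by dsimp only; nlinarith, by dsimp only; nlinarith⟩
    have h1 := hD hmx hmy hl hm hlm
    have h2 := hD hMx hMy hl hm hlm
    simp only [Prod.smul_mk, smul_eq_mul, Prod.mk_add_mk, Set.mem_setOf_eq] at h1 h2
    obtain ⟨-, -, h1a, -⟩ := h1
    obtain ⟨-, -, -, h2b⟩ := h2
    have hsum : l * (δ * X) + m * (δ * Y) ≤ ε := by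
      have e1 : (0:ℝ) ≤ (1 - l) * (δ * X) :=
        mul_nonneg (by linarith) (mul_nonneg hδpos.le hXpos.le)
      have e2 : (0:ℝ) ≤ (1 - m) * (δ * Y) :=
        mul_nonneg (by linarith) (mul_nonneg hδpos.le hYpos.le)
      nlinarith
    constructor
    · nlinarith [h1a, hsum]
    · nlinarith [h2b, hsum]
  exact ⟨le_of_forall_pos_le_add fun ε hε => (key ε hε).1,
         le_of_forall_pos_le_add fun ε hε => (key ε hε).2⟩

/-- Three-point equality lemma for functions affine on combinations. -/
lemma three_pt (a : ℝ → ℝ)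
    (heq : ∀ x ∈ Ioo (0:ℝ) 1, ∀ y ∈ Ioo (0:ℝ) 1, ∀ l m : ℝ, 0 ≤ l → 0 ≤ m → l + m = 1 →
      a (l*x + m*y) = l * a x + m * a y)
    {p q r : ℝ} (hp : p ∈ Ioo (0:ℝ) 1) (hr : r ∈ Ioo (0:ℝ) 1)
    (hpq : p ≤ q) (hqr : q ≤ r) (hpr : p < r) :
    (r - q) * a p + (q - p) * a r = (r - p) * a q := by
  have hd : (0:ℝ) < r - p := by linarith
  have h := heq p hp r hr ((r - q)/(r-p)) ((q - p)/(r-p))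
    (div_nonneg (by linarith) hd.le) (div_nonneg (by linarith) hd.le)
    (by field_simp; ring)
  have hcomb : (r - q)/(r-p) * p + (q - p)/(r-p) * r = q := by
    field_simp; ring
  rw [hcomb] at h
  field_simp at h
  linarith




/-- With D convex, Φ(t) = -log(b(t)-a(t)) is affine on (0,1) iff
    there is c with a(t) = a(0)+ct and b(t) = b(0)+ct on (0,1) (triviality). -/
theorem affine_iff_trivial (a b : ℝ → ℝ)
    (ha : ContDiff ℝ 2 a) (hb : ContDiff ℝ 2 b)
    (hab : ∀ t, a t < b t)
    (hD : Convex ℝ {p : ℝ × ℝ | 0 < p.1 ∧ p.1 < 1 ∧ a p.1 < p.2 ∧ p.2 < b p.1}) :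
    (∃ c d : ℝ, ∀ t ∈ Set.Ioo (0 : ℝ) 1, -Real.log (b t - a t) = c * t + d) ↔
      (∃ c : ℝ, ∀ t ∈ Set.Ioo (0 : ℝ) 1, a t = a 0 + c * t ∧ b t = b 0 + c * t) := by
  have hcc := aux_cc a b hab hD
  constructor
  · rintro ⟨c, d, hΦ⟩
    have hexp : ∀ t ∈ Ioo (0:ℝ) 1, b t - a t = Real.exp (-(c*t+d)) := by
      intro t ht
      have hpos : 0 < b t - a t := sub_pos.2 (hab t)
      have := hΦ t ht
      have hlog : Real.log (b t - a t) = -(c*t+d) := by linarith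
      rw [← hlog, Real.exp_log hpos]
    have hq : (1/4 : ℝ) ∈ Ioo (0:ℝ) 1 := by norm_num
    have hh : (1/2 : ℝ) ∈ Ioo (0:ℝ) 1 := by norm_num
    have hr : (3/4 : ℝ) ∈ Ioo (0:ℝ) 1 := by norm_num
    -- c = 0
    have hc0 : c = 0 := by
      by_contra hc
      have hmid := hcc (1/4) hq (3/4) hr (1/2) (1/2) (by norm_num) (by norm_num) (by norm_num)
      have hm : (1/2 : ℝ) * (1/4) + (1/2) * (3/4) = 1/2 := by norm_num
      rw [hm] at hmid
      have hconc : (1/2) * (b (1/4) - a (1/4)) + (1/2) * (b (3/4) - a (3/4))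
          ≤ b (1/2) - a (1/2) := by
        obtain ⟨h1, h2⟩ := hmid; linarith
      rw [hexp _ hq, hexp _ hr, hexp _ hh] at hconc
      have hne : -(c*(1/4)+d) ≠ -(c*(3/4)+d) := by
        intro h; apply hc; linarith [neg_injective h]
      have hstrict := strictConvexOn_exp.2 (Set.mem_univ (-(c*(1/4)+d)))
        (Set.mem_univ (-(c*(3/4)+d))) hne (by norm_num : (0:ℝ) < 1/2)
        (by norm_num : (0:ℝ) < 1/2) (by norm_num)
      simp only [smul_eq_mul] at hstrict
      have he : (1/2:ℝ) * (-(c*(1/4)+d)) + (1/2) * (-(c*(3/4)+d)) = -(c*(1/2)+d) := by ring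
      rw [he] at hstrict
      linarith
    -- b - a is constant exp(-d) on Ioo
    have hconst : ∀ t ∈ Ioo (0:ℝ) 1, b t - a t = Real.exp (-d) := by
      intro t ht
      have := hexp t ht
      rw [hc0] at this
      simpa using this
    -- a satisfies the combination equality
    have heq : ∀ x ∈ Ioo (0:ℝ) 1, ∀ y ∈ Ioo (0:ℝ) 1, ∀ l m : ℝ, 0 ≤ l → 0 ≤ m → l + m = 1 →
        a (l*x + m*y) = l * a x + m * a y := by
      intro x hx y hy l m hl hm hlm
      have hz : l*x + m*y ∈ Ioo (0:ℝ) 1 := by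
        have := (convex_Ioo (0:ℝ) 1) hx hy hl hm hlm
        simpa [smul_eq_mul] using this
      have ⟨h1, h2⟩ := hcc x hx y hy l m hl hm hlm
      have e1 := hconst x hx
      have e2 := hconst y hy
      have e3 := hconst _ hz
      have hK : l * Real.exp (-d) + m * Real.exp (-d) = Real.exp (-d) := by
        rw [← add_mul, hlm, one_mul]
      have f1 : l * b x - l * a x = l * Real.exp (-d) := by rw [← mul_sub, e1]
      have f2 : m * b y - m * a y = m * Real.exp (-d) := by rw [← mul_sub, e2]
      have top : a (l*x + m*y) ≥ l * a x + m * a y := by linarith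
      linarith
    set c' : ℝ := 2 * (a (3/4) - a (1/4)) with hc'
    set A : ℝ := a (1/4) - c'/4 with hA
    have haff : ∀ t ∈ Ioo (0:ℝ) 1, a t = A + c' * t := by
      intro t ht
      rcases le_or_gt t (1/4) with h1 | h1
      · have h3 := three_pt a heq ht hr h1 (by norm_num) (by linarith [ht.1])
        simp only [hA, hc']
        linear_combination 2 * h3
      · rcases le_or_gt t (3/4) with h2 | h2
        · have h3 := three_pt a heq hq hr h1.le h2 (by norm_num)
          simp only [hA, hc']
          linear_combination (-2 : ℝ) * h3
        · have h3 := three_pt a heq hq ht (by norm_num) h2.le (by linarith)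
          simp only [hA, hc']
          linear_combination 2 * h3
    -- extend to 0 by continuity
    have hclos : ∀ (f : ℝ → ℝ), Continuous f →
        (∀ t ∈ Ioo (0:ℝ) 1, f t = A + c' * t) → f 0 = A := by
      intro f hf hfa
      have h0 : (0:ℝ) ∈ closure (Ioo (0:ℝ) 1) := by
        rw [closure_Ioo (by norm_num : (0:ℝ) ≠ 1)]; exact ⟨le_refl _, by norm_num⟩
      have := (Set.EqOn.closure (fun t ht => hfa t ht) hf (continuous_const.add (continuous_const.mul continuous_id))) h0
      simpa using this
    have ha0 : a 0 = A := hclos a ha.continuous haff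
    have hbff : ∀ t ∈ Ioo (0:ℝ) 1, b t = (A + Real.exp (-d)) + c' * t := by
      intro t ht
      have := hconst t ht
      have := haff t ht
      linarith
    have hb0 : b 0 = A + Real.exp (-d) := by
      have h0 : (0:ℝ) ∈ closure (Ioo (0:ℝ) 1) := by
        rw [closure_Ioo (by norm_num : (0:ℝ) ≠ 1)]; exact ⟨le_refl _, by norm_num⟩
      have := (Set.EqOn.closure (fun t ht => hbff t ht) hb.continuous (continuous_const.add (continuous_const.mul continuous_id))) h0
      simpa using this
    refine ⟨c', fun t ht => ⟨?_, ?_⟩⟩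
    · rw [ha0]; exact haff t ht
    · rw [hb0]; exact hbff t ht
  · rintro ⟨c, h⟩
    refine ⟨0, -Real.log (b 0 - a 0), fun t ht => ?_⟩
    obtain ⟨h1, h2⟩ := h t ht
    have : b t - a t = b 0 - a 0 := by rw [h1, h2]; ring
    rw [this]; ring
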